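/- (Complementary slackness for the SOCP primal–dual pair.) Let w ∈ ℝ^W, let (x, y, z_s, z_q) be FP'(w)-feasible, and let (μ_f, μ_y, λ_s, λ_q) be dual feasible with 1ᵀz_s + 1ᵀz_q = D_w(μ, λ) (equal objective values). Then: ⟨1 − λ_s, z_s⟩ = 0, ⟨1 − λ_q, z_q⟩ = 0, ⟨λ_s, A_s x + γ_s − z_s⟩ = 0, and for every j ∈ {1,…,N}: λ_{q,j} · (‖y_j‖₂ − ⟨c_q^j, x⟩ − γ_q^j − z_{q,j}) = 0 and ⟨μ_y^j, y_j⟩ + λ_{q,j}‖y_j‖₂ = 0. -/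

import Mathlib

open Matrix

/-- Euclidean norm on `Fin k → ℝ`. -/
noncomputable def euclNorm {k : ℕ} (y : Fin k → ℝ) : ℝ := Real.sqrt (∑ i, (y i) ^ 2)

/-- Euclidean inner product on `Fin k → ℝ`. -/
def dotp {k : ℕ} (a b : Fin k → ℝ) : ℝ := ∑ i, a i * b i

/-- The constant data of the SOCP `FP'(w)` (and of its dual `DP'(w)`). -/
structure SOCPData (n m s N W : ℕ) where
  Af : Matrix (Fin m) (Fin n) ℝ
  Bf : Matrix (Fin m) (Fin W) ℝ
  As : Matrix (Fin s) (Fin n) ℝ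
  gf : Fin m → ℝ
  gs : Fin s → ℝ
  Ay : Fin N → Matrix (Fin 3) (Fin n) ℝ
  bY : Fin N → Fin 3 → ℝ
  cq : Fin N → Fin n → ℝ
  gq : Fin N → ℝ

/-- Feasibility of `(x, y, z_s, z_q)` for the SOCP `FP'(w)`. -/
def FPfeas {n m s N W : ℕ} (d : SOCPData n m s N W) (w : Fin W → ℝ) (x : Fin n → ℝ)
    (y : Fin N → Fin 3 → ℝ) (zs : Fin s → ℝ) (zq : Fin N → ℝ) : Prop :=
  (∀ i, 0 ≤ zs i) ∧ (∀ j, 0 ≤ zq j) ∧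
  d.Af.mulVec x + d.Bf.mulVec w + d.gf = 0 ∧
  (∀ i, d.As.mulVec x i + d.gs i ≤ zs i) ∧
  (∀ j, y j = (d.Ay j).mulVec x + d.bY j) ∧
  (∀ j, euclNorm (y j) ≤ dotp (d.cq j) x + d.gq j + zq j)

/-- Dual feasibility of `(μ_f, μ_y, λ_s, λ_q)` for `DP'(w)`. -/
def DualFeas {n m s N W : ℕ} (d : SOCPData n m s N W) (muf : Fin m → ℝ)
    (muy : Fin N → Fin 3 → ℝ) (ls : Fin s → ℝ) (lq : Fin N → ℝ) : Prop :=
  (∀ i, 0 ≤ ls i ∧ ls i ≤ 1) ∧ (∀ j, 0 ≤ lq j ∧ lq j ≤ 1) ∧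
  (d.Af.transpose.mulVec muf + d.As.transpose.mulVec ls
    = (∑ j, (d.Ay j).transpose.mulVec (muy j)) + ∑ j, lq j • d.cq j) ∧
  (∀ j, euclNorm (muy j) ≤ lq j)

/-- The dual objective `D_w(μ, λ)`. -/
def Dobj {n m s N W : ℕ} (d : SOCPData n m s N W) (w : Fin W → ℝ) (muf : Fin m → ℝ)
    (muy : Fin N → Fin 3 → ℝ) (ls : Fin s → ℝ) (lq : Fin N → ℝ) : ℝ :=
  dotp muf (d.Bf.mulVec w + d.gf) + dotp ls d.gs
    - (∑ j, dotp (muy j) (d.bY j)) - ∑ j, lq j * d.gq j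

/-- `fp'(w)`: the optimal (infimum) value of the primal SOCP `FP'(w)`, in `EReal`. -/
noncomputable def fpVal {n m s N W : ℕ} (d : SOCPData n m s N W) (w : Fin W → ℝ) : EReal :=
  sInf {v : EReal | ∃ x y zs zq, FPfeas d w x y zs zq ∧
    v = (((∑ i, zs i) + ∑ j, zq j : ℝ) : EReal)}

/-- `dp'(w)`: the optimal (supremum) value of the dual SOCP `DP'(w)`, in `EReal`. -/
noncomputable def dpVal {n m s N W : ℕ} (d : SOCPData n m s N W) (w : Fin W → ℝ) : EReal :=
  sSup {v : EReal | ∃ muf muy ls lq, DualFeas d muf muy ls lq ∧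
    v = ((Dobj d w muf muy ls lq : ℝ) : EReal)}


section csAux

lemma enorm_nonneg' {k : ℕ} (a : Fin k → ℝ) : 0 ≤ euclNorm a := Real.sqrt_nonneg _

lemma dotp_mulVec_aux {a b : ℕ} (A : Matrix (Fin a) (Fin b) ℝ) (u : Fin a → ℝ)
    (v : Fin b → ℝ) : dotp u (A.mulVec v) = dotp (A.transpose.mulVec u) v := by
  simp only [dotp, Matrix.mulVec, dotProduct, Matrix.transpose_apply,
    Finset.mul_sum, Finset.sum_mul]
  rw [Finset.sum_comm]
  exact Finset.sum_congr rfl fun i _ => Finset.sum_congr rfl fun j _ => by ring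

lemma dotp_sum_left {k : ℕ} {ι : Type*} (t : Finset ι) (f : ι → Fin k → ℝ)
    (x : Fin k → ℝ) : dotp (∑ j ∈ t, f j) x = ∑ j ∈ t, dotp (f j) x := by
  simp only [dotp, Finset.sum_apply, Finset.sum_mul]
  exact Finset.sum_comm

lemma dotp_add_left {k : ℕ} (u v x : Fin k → ℝ) :
    dotp (u + v) x = dotp u x + dotp v x := by
  simp [dotp, add_mul, Finset.sum_add_distrib]

lemma dotp_smul_left {k : ℕ} (c : ℝ) (v x : Fin k → ℝ) :
    dotp (c • v) x = c * dotp v x := by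
  simp [dotp, Finset.mul_sum, mul_assoc]

lemma neg_enorm_mul_le_dotp {k : ℕ} (a b : Fin k → ℝ) :
    -(euclNorm a * euclNorm b) ≤ dotp a b := by
  have h := Real.sum_mul_le_sqrt_mul_sqrt (Finset.univ : Finset (Fin k))
    (fun i => -(a i)) b
  have h2 : ∑ i, (-(a i)) ^ 2 = ∑ i, a i ^ 2 :=
    Finset.sum_congr rfl fun i _ => by ring
  have h3 : ∑ i, (-(a i)) * b i = -(∑ i, a i * b i) := by
    rw [← Finset.sum_neg_distrib]
    exact Finset.sum_congr rfl fun i _ => by ring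
  rw [h2, h3] at h
  simp only [euclNorm, dotp]
  linarith

end csAux

/-- Complementary slackness
 for the SOCP primal–dual pair: if a primal feasible
point and a dual feasible point have equal objective values, then all the
complementarity relations hold. -/
theorem stmt_13 {n m s N W : ℕ} (hn : 0 < n) (hm : 0 < m) (hs : 0 < s) (hN : 0 < N)
    (hW : 0 < W) (d : SOCPData n m s N W) (w : Fin W → ℝ)
    (x : Fin n → ℝ) (y : Fin N → Fin 3 → ℝ) (zs : Fin s → ℝ) (zq : Fin N → ℝ)
    (hP : FPfeas d w x y zs zq)
    (muf : Fin m → ℝ) (muy : Fin N → Fin 3 → ℝ) (ls : Fin s → ℝ) (lq : Fin N → ℝ)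
    (hD : DualFeas d muf muy ls lq)
    (heq : (∑ i, zs i) + ∑ j, zq j = Dobj d w muf muy ls lq) :
    (∑ i, (1 - ls i) * zs i) = 0 ∧
    (∑ j, (1 - lq j) * zq j) = 0 ∧
    (∑ i, ls i * (d.As.mulVec x i + d.gs i - zs i)) = 0 ∧
    (∀ j, lq j * (euclNorm (y j) - dotp (d.cq j) x - d.gq j - zq j) = 0) ∧
    (∀ j, dotp (muy j) (y j) + lq j * euclNorm (y j) = 0) := by
  obtain ⟨hzs, hzq, hAf, hAs, hy, hcone⟩ := hP
  obtain ⟨hls, hlq, hdual, hmu⟩ := hD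
  -- Step A: dotp muf (Bf w + gf) = - dotp (Afᵀ muf) x
  have hA : dotp muf (d.Bf.mulVec w + d.gf) = - dotp (d.Af.transpose.mulVec muf) x := by
    rw [← dotp_mulVec_aux]
    simp only [dotp, Pi.add_apply]
    rw [← Finset.sum_neg_distrib]
    refine Finset.sum_congr rfl fun i _ => ?_
    have h := congrFun hAf i
    simp only [Pi.add_apply, Pi.zero_apply] at h
    have h2 : (d.Bf.mulVec w) i + d.gf i = -((d.Af.mulVec x) i) := by linarith
    rw [h2]; ring
  -- Step C: dot the dual constraint with x
  have hdx : dotp (d.Af.transpose.mulVec muf) x + dotp (d.As.transpose.mulVec ls) x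
      = (∑ j, dotp ((d.Ay j).transpose.mulVec (muy j)) x) + ∑ j, lq j * dotp (d.cq j) x := by
    have h := congrArg (fun v : Fin n → ℝ => dotp v x) hdual
    simpa only [dotp_add_left, dotp_sum_left, dotp_smul_left] using h
  -- Step D
  have hAyx : ∀ j, dotp ((d.Ay j).transpose.mulVec (muy j)) x
      = dotp (muy j) (y j) - dotp (muy j) (d.bY j) := by
    intro j
    rw [← dotp_mulVec_aux]
    simp only [dotp, hy j, Pi.add_apply, mul_add, Finset.sum_add_distrib]
    ring
  -- Step E
  have hE : dotp (d.As.transpose.mulVec ls) x = dotp ls (d.As.mulVec x) :=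
    (dotp_mulVec_aux _ _ _).symm
  -- the key zero-gap identity
  have key : (∑ i, zs i) + (∑ j, zq j) + (∑ j, dotp (muy j) (y j))
      + (∑ j, lq j * dotp (d.cq j) x) + (∑ j, lq j * d.gq j)
      - (dotp ls (d.As.mulVec x)) - (dotp ls d.gs) = 0 := by
    rw [Dobj, hA] at heq
    rw [Finset.sum_congr rfl (fun j _ => hAyx j), Finset.sum_sub_distrib] at hdx
    linarith [heq, hdx, hE]
  -- split into five nonnegative sums
  have hsplit : (∑ i, (1 - ls i) * zs i)
      + (∑ i, ls i * (zs i - (d.As.mulVec x i + d.gs i)))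
      + (∑ j, (1 - lq j) * zq j)
      + (∑ j, lq j * (dotp (d.cq j) x + d.gq j + zq j - euclNorm (y j)))
      + (∑ j, (dotp (muy j) (y j) + lq j * euclNorm (y j))) = 0 := by
    have e1 : (∑ i, (1 - ls i) * zs i)
        + (∑ i, ls i * (zs i - (d.As.mulVec x i + d.gs i)))
        = (∑ i, zs i) - (∑ i, ls i * (d.As.mulVec x i)) - (∑ i, ls i * d.gs i) := by
      rw [← Finset.sum_add_distrib, ← Finset.sum_sub_distrib, ← Finset.sum_sub_distrib]
      exact Finset.sum_congr rfl fun i _ => by ring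
    have e2 : (∑ j, (1 - lq j) * zq j)
        + (∑ j, lq j * (dotp (d.cq j) x + d.gq j + zq j - euclNorm (y j)))
        + (∑ j, (dotp (muy j) (y j) + lq j * euclNorm (y j)))
        = (∑ j, zq j) + (∑ j, dotp (muy j) (y j))
          + (∑ j, lq j * dotp (d.cq j) x) + (∑ j, lq j * d.gq j) := by
      rw [← Finset.sum_add_distrib, ← Finset.sum_add_distrib, ← Finset.sum_add_distrib,
        ← Finset.sum_add_distrib, ← Finset.sum_add_distrib]
      exact Finset.sum_congr rfl fun j _ => by ring
    have e3 : dotp ls (d.As.mulVec x) = ∑ i, ls i * (d.As.mulVec x i) := rfl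
    have e4 : dotp ls d.gs = ∑ i, ls i * d.gs i := rfl
    rw [e3, e4] at key
    linarith [e1, e2, key]
  -- nonnegativity of each sum, termwise
  have t1 : ∀ i : Fin s, 0 ≤ (1 - ls i) * zs i := fun i =>
    mul_nonneg (by linarith [(hls i).2]) (hzs i)
  have t2 : ∀ i : Fin s, 0 ≤ ls i * (zs i - (d.As.mulVec x i + d.gs i)) := fun i =>
    mul_nonneg (hls i).1 (by linarith [hAs i])
  have t3 : ∀ j : Fin N, 0 ≤ (1 - lq j) * zq j := fun j =>
    mul_nonneg (by linarith [(hlq j).2]) (hzq j)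
  have t4 : ∀ j : Fin N, 0 ≤ lq j * (dotp (d.cq j) x + d.gq j + zq j - euclNorm (y j)) := fun j =>
    mul_nonneg (hlq j).1 (by linarith [hcone j])
  have t5 : ∀ j : Fin N, 0 ≤ dotp (muy j) (y j) + lq j * euclNorm (y j) := by
    intro j
    have h1 := neg_enorm_mul_le_dotp (muy j) (y j)
    have h2 : euclNorm (muy j) * euclNorm (y j) ≤ lq j * euclNorm (y j) :=
      mul_le_mul_of_nonneg_right (hmu j) (enorm_nonneg' _)
    linarith
  have s1 : 0 ≤ ∑ i, (1 - ls i) * zs i := Finset.sum_nonneg fun i _ => t1 i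
  have s2 : 0 ≤ ∑ i, ls i * (zs i - (d.As.mulVec x i + d.gs i)) :=
    Finset.sum_nonneg fun i _ => t2 i
  have s3 : 0 ≤ ∑ j, (1 - lq j) * zq j := Finset.sum_nonneg fun j _ => t3 j
  have s4 : 0 ≤ ∑ j, lq j * (dotp (d.cq j) x + d.gq j + zq j - euclNorm (y j)) :=
    Finset.sum_nonneg fun j _ => t4 j
  have s5 : 0 ≤ ∑ j, (dotp (muy j) (y j) + lq j * euclNorm (y j)) :=
    Finset.sum_nonneg fun j _ => t5 j
  have z1 : (∑ i, (1 - ls i) * zs i) = 0 := by linarith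
  have z2 : (∑ i, ls i * (zs i - (d.As.mulVec x i + d.gs i))) = 0 := by linarith
  have z3 : (∑ j, (1 - lq j) * zq j) = 0 := by linarith
  have z4 : (∑ j, lq j * (dotp (d.cq j) x + d.gq j + zq j - euclNorm (y j))) = 0 := by linarith
  have z5 : (∑ j, (dotp (muy j) (y j) + lq j * euclNorm (y j))) = 0 := by linarith
  refine ⟨z1, z3, ?_, ?_, ?_⟩
  · have : (∑ i, ls i * (d.As.mulVec x i + d.gs i - zs i))
        = -(∑ i, ls i * (zs i - (d.As.mulVec x i + d.gs i))) := by
      rw [← Finset.sum_neg_distrib]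
      exact Finset.sum_congr rfl fun i _ => by ring
    rw [this, z2, neg_zero]
  · intro j
    have h := (Finset.sum_eq_zero_iff_of_nonneg (fun j _ => t4 j)).mp z4 j (Finset.mem_univ j)
    have : lq j * (euclNorm (y j) - dotp (d.cq j) x - d.gq j - zq j)
        = -(lq j * (dotp (d.cq j) x + d.gq j + zq j - euclNorm (y j))) := by ring
    rw [this, h, neg_zero]
  · intro j
    exact (Finset.sum_eq_zero_iff_of_nonneg (fun j _ => t5 j)).mp z5 j (Finset.mem_univ j)
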